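/- Let λ, θ ∈ ℝ^{Q₀}, identified with the tuples (λ_v Id)_{v∈Q₀} and (θ_v Id)_{v∈Q₀} of scalar matrices. Let h = (𝐢 − 𝐣)/√2, i.e. the quaternionic action with z₁ = √−1/√2 and z₂ = −1/√2. Then the map x ↦ h·x is a bijection from the set {x ∈ Rep(Q̄,α) : μ_ℂ(x) = λ and μ_ℝ(x) = √−1·θ} onto the set {x ∈ Rep(Q̄,α) : μ_ℂ(x) = −λ − √−1·θ and μ_ℝ(x) = 0}. -/
import Mathlib


open Matrix Finset

namespace QuiverMomentMaps

/-- Cast a matrix along equalities of its dimensions. -/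
def castM {m n m' n' : ℕ} (hm : m = m') (hn : n = n')
    (M : Matrix (Fin m) (Fin n) ℂ) : Matrix (Fin m') (Fin n') ℂ :=
  Matrix.of fun i j => M (Fin.cast hm.symm i) (Fin.cast hn.symm j)

variable {V A : Type} [Fintype V] [Fintype A] [DecidableEq V]

/-- A point of `Rep(Q̄,α)`: for each arrow `a` of the quiver `Q = (V, A, t, h)` a matrix
`x_a` of size `α(h a) × α(t a)` together with a matrix `x_{a*}` of size `α(t a) × α(h a)`. -/
abbrev RepX (t h : A → V) (α : V → ℕ) : Type :=
  (∀ a : A, Matrix (Fin (α (h a))) (Fin (α (t a))) ℂ) ×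
    (∀ a : A, Matrix (Fin (α (t a))) (Fin (α (h a))) ℂ)

/-- The complex moment map `μ_ℂ`; its `v`-component is
`Σ_{a : h(a)=v} x_a x_{a*} − Σ_{a : t(a)=v} x_{a*} x_a`. -/
noncomputable def muC (t h : A → V) (α : V → ℕ) (x : RepX t h α) (v : V) :
    Matrix (Fin (α v)) (Fin (α v)) ℂ :=
  (∑ a : A, if ha : h a = v then
      castM (congrArg α ha) (congrArg α ha) (x.1 a * x.2 a) else 0)
    - ∑ a : A, if ha : t a = v then
      castM (congrArg α ha) (congrArg α ha) (x.2 a * x.1 a) else 0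

/-- The real moment map `μ_ℝ`; its `v`-component is
`(√−1/2)(Σ_{a : h(a)=v}(x_a x_a† − x_{a*}† x_{a*}) + Σ_{a : t(a)=v}(x_{a*} x_{a*}† − x_a† x_a))`. -/
noncomputable def muR (t h : A → V) (α : V → ℕ) (x : RepX t h α) (v : V) :
    Matrix (Fin (α v)) (Fin (α v)) ℂ :=
  (Complex.I / 2) •
    ((∑ a : A, if ha : h a = v then
        castM (congrArg α ha) (congrArg α ha) (x.1 a * (x.1 a)ᴴ - (x.2 a)ᴴ * x.2 a) else 0)
      + ∑ a : A, if ha : t a = v then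
        castM (congrArg α ha) (congrArg α ha) (x.2 a * (x.2 a)ᴴ - (x.1 a)ᴴ * x.1 a) else 0)

/-- The quaternionic action of `z = z₁ + z₂𝐣` on `Rep(Q̄,α)`:
`(z·x)_a = z₁x_a − z₂x_{a*}†` and `(z·x)_{a*} = z₁x_{a*} + z₂x_a†`. -/
noncomputable def qact (t h : A → V) (α : V → ℕ) (z₁ z₂ : ℂ) (x : RepX t h α) : RepX t h α :=
  (fun a => z₁ • x.1 a - z₂ • (x.2 a)ᴴ, fun a => z₁ • x.2 a + z₂ • (x.1 a)ᴴ)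

/-! ### Auxiliary sums -/

set_option linter.unusedSectionVars false

noncomputable def S1 (t h : A → V) (α : V → ℕ) (x : RepX t h α) (v : V) :
    Matrix (Fin (α v)) (Fin (α v)) ℂ :=
  ∑ a : A, if ha : h a = v then
    castM (congrArg α ha) (congrArg α ha) (x.1 a * x.2 a) else 0

noncomputable def S2 (t h : A → V) (α : V → ℕ) (x : RepX t h α) (v : V) :
    Matrix (Fin (α v)) (Fin (α v)) ℂ :=
  ∑ a : A, if ha : t a = v then
    castM (congrArg α ha) (congrArg α ha) (x.2 a * x.1 a) else 0

noncomputable def S3 (t h : A → V) (α : V → ℕ) (x : RepX t h α) (v : V) :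
    Matrix (Fin (α v)) (Fin (α v)) ℂ :=
  ∑ a : A, if ha : h a = v then
    castM (congrArg α ha) (congrArg α ha) (x.1 a * (x.1 a)ᴴ - (x.2 a)ᴴ * x.2 a) else 0

noncomputable def S4 (t h : A → V) (α : V → ℕ) (x : RepX t h α) (v : V) :
    Matrix (Fin (α v)) (Fin (α v)) ℂ :=
  ∑ a : A, if ha : t a = v then
    castM (congrArg α ha) (congrArg α ha) (x.2 a * (x.2 a)ᴴ - (x.1 a)ᴴ * x.1 a) else 0

lemma muC_eq (t h : A → V) (α : V → ℕ) (x : RepX t h α) (v : V) :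
    muC t h α x v = S1 t h α x v - S2 t h α x v := rfl

lemma muR_eq (t h : A → V) (α : V → ℕ) (x : RepX t h α) (v : V) :
    muR t h α x v = (Complex.I / 2) • (S3 t h α x v + S4 t h α x v) := rfl

@[simp] lemma castM_rfl {m n : ℕ} (M : Matrix (Fin m) (Fin n) ℂ) :
    castM rfl rfl M = M := rfl

lemma S1_qact (t h : A → V) (α : V → ℕ) (z₁ z₂ : ℂ) (x : RepX t h α) (v : V) :
    S1 t h α (qact t h α z₁ z₂ x) v
      = z₁ ^ 2 • S1 t h α x v - z₂ ^ 2 • (S1 t h α x v)ᴴ + (z₁ * z₂) • S3 t h α x v := by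
  unfold S1 S3 qact
  rw [Matrix.conjTranspose_sum]
  simp only [Finset.smul_sum]
  rw [← Finset.sum_sub_distrib, ← Finset.sum_add_distrib]
  refine Finset.sum_congr rfl fun a _ => ?_
  by_cases ha : h a = v
  · subst ha
    simp only [dif_pos rfl, castM_rfl, dite_true]
    simp only [Matrix.sub_mul, Matrix.add_mul, Matrix.mul_add, Matrix.mul_sub,
      Matrix.smul_mul, Matrix.mul_smul, smul_smul, conjTranspose_mul, smul_sub, smul_add]
    module
  · simp [dif_neg ha]

lemma S2_qact (t h : A → V) (α : V → ℕ) (z₁ z₂ : ℂ) (x : RepX t h α) (v : V) :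
    S2 t h α (qact t h α z₁ z₂ x) v
      = z₁ ^ 2 • S2 t h α x v - z₂ ^ 2 • (S2 t h α x v)ᴴ - (z₁ * z₂) • S4 t h α x v := by
  unfold S2 S4 qact
  rw [Matrix.conjTranspose_sum]
  simp only [Finset.smul_sum]
  rw [← Finset.sum_sub_distrib, ← Finset.sum_sub_distrib]
  refine Finset.sum_congr rfl fun a _ => ?_
  by_cases ha : t a = v
  · subst ha
    simp only [dif_pos rfl, castM_rfl, dite_true]
    simp only [Matrix.sub_mul, Matrix.add_mul, Matrix.mul_add, Matrix.mul_sub,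
      Matrix.smul_mul, Matrix.mul_smul, smul_smul, conjTranspose_mul, smul_sub, smul_add]
    module
  · simp [dif_neg ha]

lemma S3_qact (t h : A → V) (α : V → ℕ) (z₁ z₂ : ℂ) (x : RepX t h α) (v : V) :
    S3 t h α (qact t h α z₁ z₂ x) v
      = (z₁ * star z₁ - z₂ * star z₂) • S3 t h α x v
        - (2 * (z₁ * star z₂)) • S1 t h α x v
        - (2 * (star z₁ * z₂)) • (S1 t h α x v)ᴴ := by
  unfold S1 S3 qact
  rw [Matrix.conjTranspose_sum]
  simp only [Finset.smul_sum]
  rw [← Finset.sum_sub_distrib, ← Finset.sum_sub_distrib]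
  refine Finset.sum_congr rfl fun a _ => ?_
  by_cases ha : h a = v
  · subst ha
    simp only [dif_pos rfl, castM_rfl, dite_true]
    simp only [conjTranspose_sub, conjTranspose_add, conjTranspose_smul,
      conjTranspose_conjTranspose, conjTranspose_mul,
      Matrix.sub_mul, Matrix.add_mul, Matrix.mul_add, Matrix.mul_sub,
      Matrix.smul_mul, Matrix.mul_smul, smul_smul, smul_sub, smul_add]
    module
  · simp [dif_neg ha]

lemma S4_qact (t h : A → V) (α : V → ℕ) (z₁ z₂ : ℂ) (x : RepX t h α) (v : V) :
    S4 t h α (qact t h α z₁ z₂ x) v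
      = (z₁ * star z₁ - z₂ * star z₂) • S4 t h α x v
        + (2 * (z₁ * star z₂)) • S2 t h α x v
        + (2 * (star z₁ * z₂)) • (S2 t h α x v)ᴴ := by
  unfold S2 S4 qact
  rw [Matrix.conjTranspose_sum]
  simp only [Finset.smul_sum]
  rw [← Finset.sum_add_distrib, ← Finset.sum_add_distrib]
  refine Finset.sum_congr rfl fun a _ => ?_
  by_cases ha : t a = v
  · subst ha
    simp only [dif_pos rfl, castM_rfl, dite_true]
    simp only [conjTranspose_sub, conjTranspose_add, conjTranspose_smul,
      conjTranspose_conjTranspose, conjTranspose_mul,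
      Matrix.sub_mul, Matrix.add_mul, Matrix.mul_add, Matrix.mul_sub,
      Matrix.smul_mul, Matrix.mul_smul, smul_smul, smul_sub, smul_add]
    module
  · simp [dif_neg ha]

lemma muC_qact (t h : A → V) (α : V → ℕ) (z₁ z₂ : ℂ) (x : RepX t h α) (v : V) :
    muC t h α (qact t h α z₁ z₂ x) v
      = z₁ ^ 2 • muC t h α x v - z₂ ^ 2 • (muC t h α x v)ᴴ
        - (2 * Complex.I * (z₁ * z₂)) • muR t h α x v := by
  simp only [muC_eq, muR_eq, S1_qact, S2_qact, conjTranspose_sub]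
  match_scalars <;> (first
    | ring1
    | linear_combination (z₁ * z₂) * Complex.I_mul_I
    | linear_combination (-(z₁ * z₂)) * Complex.I_mul_I)

lemma muR_qact (t h : A → V) (α : V → ℕ) (z₁ z₂ : ℂ) (x : RepX t h α) (v : V) :
    muR t h α (qact t h α z₁ z₂ x) v
      = (z₁ * star z₁ - z₂ * star z₂) • muR t h α x v
        - (Complex.I * (z₁ * star z₂)) • muC t h α x v
        - (Complex.I * (star z₁ * z₂)) • (muC t h α x v)ᴴ := by
  simp only [muC_eq, muR_eq, S3_qact, S4_qact, conjTranspose_sub]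
  match_scalars <;> ring

/-- Composition of two quaternionic actions. -/
lemma qact_qact (t h : A → V) (α : V → ℕ) (w₁ w₂ z₁ z₂ : ℂ) (x : RepX t h α) :
    qact t h α w₁ w₂ (qact t h α z₁ z₂ x)
      = qact t h α (w₁ * z₁ - w₂ * star z₂) (w₁ * z₂ + w₂ * star z₁) x := by
  unfold qact
  refine Prod.ext ?_ ?_ <;> funext a <;>
    simp only [conjTranspose_add, conjTranspose_sub, conjTranspose_smul,
      conjTranspose_conjTranspose, smul_add, smul_sub, smul_smul, sub_smul, add_smul] <;>
    module

lemma qact_one (t h : A → V) (α : V → ℕ) (x : RepX t h α) :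
    qact t h α 1 0 x = x := by
  unfold qact
  simp

/-- **Hyperkähler twist (proof of Proposition 3.6 of Bellamy–Schedler).**
Let `λ, θ ∈ ℝ^{Q₀}`, identified with tuples of scalar matrices.  Multiplication by the
quaternion `h = (𝐢 − 𝐣)/√2`, i.e. the quaternionic action with `z₁ = √−1/√2` and
`z₂ = −1/√2`, is a bijection from
`{x : μ_ℂ(x) = λ, μ_ℝ(x) = √−1·θ}` onto `{x : μ_ℂ(x) = −λ − √−1·θ, μ_ℝ(x) = 0}`. -/
theorem stmt_2 (t h : A → V) (α : V → ℕ) (lam th : V → ℝ) :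
    Set.BijOn
      (qact t h α (Complex.I / (Real.sqrt 2 : ℂ)) (-(1 / (Real.sqrt 2 : ℂ))))
      {x : RepX t h α | (∀ v, muC t h α x v = (lam v : ℂ) • 1) ∧
        ∀ v, muR t h α x v = (Complex.I * (th v : ℂ)) • 1}
      {x : RepX t h α | (∀ v, muC t h α x v = (-(lam v : ℂ) - Complex.I * (th v : ℂ)) • 1) ∧
        ∀ v, muR t h α x v = 0} := by
  have hr2 : ((Real.sqrt 2 : ℂ)) ^ 2 = 2 := by
    rw [← Complex.ofReal_pow, Real.sq_sqrt (by norm_num : (0:ℝ) ≤ 2)]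
    norm_num
  have hrne : ((Real.sqrt 2 : ℂ)) ≠ 0 := by
    intro h0
    rw [h0] at hr2; simp at hr2
  have hstarr : star ((Real.sqrt 2 : ℂ)) = ((Real.sqrt 2 : ℂ)) := Complex.conj_ofReal _
  set r : ℂ := (Real.sqrt 2 : ℂ)
  set z₁ : ℂ := Complex.I / r with hz₁
  set z₂ : ℂ := -(1 / r) with hz₂
  have hsr : ∀ xr : ℝ, star ((xr : ℂ)) = (xr : ℂ) := fun xr => Complex.conj_ofReal xr
  have hsI : star Complex.I = -Complex.I := Complex.conj_I
  have es1 : star z₁ = -z₁ := by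
    rw [hz₁]; simp [div_eq_mul_inv, star_inv₀, hstarr, hsI]
  have es2 : star z₂ = z₂ := by
    rw [hz₂]; simp [div_eq_mul_inv, star_inv₀, hstarr]
  have e1 : z₁ ^ 2 = -(1/2) := by
    rw [hz₁, show (Complex.I/r)^2 = Complex.I^2/r^2 by ring, Complex.I_sq, hr2]
    norm_num
  have e2 : z₂ ^ 2 = 1/2 := by
    rw [hz₂, show (-(1/r))^2 = 1/r^2 by ring, hr2]
  have e3 : z₁ * z₂ = -(Complex.I/2) := by
    rw [hz₁, hz₂, show Complex.I / r * -(1/r) = -(Complex.I / r^2) by ring, hr2]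
  -- products with conjugates
  have g0 : z₁ * star z₁ - z₂ * star z₂ = 0 := by
    rw [es1, es2, show z₁ * -z₁ - z₂ * z₂ = -(z₁^2) - z₂^2 by ring, e1, e2]; norm_num
  have g2 : z₁ * star z₂ = -(Complex.I/2) := by rw [es2]; exact e3
  have g3 : star z₁ * z₂ = Complex.I/2 := by
    rw [es1, show -z₁ * z₂ = -(z₁ * z₂) by ring, e3]; ring
  -- facts about the inverse coefficients
  have n1 : (-z₁) ^ 2 = z₁ ^ 2 := by ring
  have n2 : (-z₂) ^ 2 = z₂ ^ 2 := by ring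
  have n3 : (-z₁) * (-z₂) = z₁ * z₂ := by ring
  have n4 : (-z₁) * star (-z₁) - (-z₂) * star (-z₂) = z₁ * star z₁ - z₂ * star z₂ := by
    rw [star_neg, star_neg]; ring
  have n5 : (-z₁) * star (-z₂) = z₁ * star z₂ := by rw [star_neg]; ring
  have n6 : star (-z₁) * (-z₂) = star z₁ * z₂ := by rw [star_neg]; ring
  -- composition coefficients
  have c1 : (-z₁) * z₁ - (-z₂) * star z₂ = 1 := by
    rw [es2]; linear_combination e2 - e1
  have c2 : (-z₁) * z₂ + (-z₂) * star z₁ = 0 := by rw [es1]; ring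
  have d1 : z₁ * (-z₁) - z₂ * star (-z₂) = 1 := by
    rw [star_neg, es2]; linear_combination e2 - e1
  have d2 : z₁ * (-z₂) + z₂ * star (-z₁) = 0 := by rw [star_neg, es1]; ring
  have hgf : ∀ x : RepX t h α, qact t h α (-z₁) (-z₂) (qact t h α z₁ z₂ x) = x := fun x => by
    rw [qact_qact, c1, c2, qact_one]
  have hfg : ∀ x : RepX t h α, qact t h α z₁ z₂ (qact t h α (-z₁) (-z₂) x) = x := fun x => by
    rw [qact_qact, d1, d2, qact_one]
  have smul_one_ct : ∀ (c : ℂ) (v : V),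
      ((c • (1 : Matrix (Fin (α v)) (Fin (α v)) ℂ)))ᴴ = star c • 1 := by
    intro c v
    rw [conjTranspose_smul, conjTranspose_one]
  have hmapsf : Set.MapsTo (qact t h α z₁ z₂)
      {x : RepX t h α | (∀ v, muC t h α x v = (lam v : ℂ) • 1) ∧
        ∀ v, muR t h α x v = (Complex.I * (th v : ℂ)) • 1}
      {x : RepX t h α | (∀ v, muC t h α x v = (-(lam v : ℂ) - Complex.I * (th v : ℂ)) • 1) ∧
        ∀ v, muR t h α x v = 0} := by
    rintro x ⟨hC, hR⟩
    constructor
    · intro v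
      rw [muC_qact, e1, e2, hC v, hR v, smul_one_ct, hsr,
        show (2 * Complex.I * (z₁ * z₂)) = 1 by
          rw [e3]; linear_combination -Complex.I_mul_I]
      match_scalars
      ring
    · intro v
      rw [muR_qact, g0, g2, g3, zero_smul, hC v, smul_one_ct, hsr]
      match_scalars
      ring
  have hmapsg : Set.MapsTo (qact t h α (-z₁) (-z₂))
      {x : RepX t h α | (∀ v, muC t h α x v = (-(lam v : ℂ) - Complex.I * (th v : ℂ)) • 1) ∧
        ∀ v, muR t h α x v = 0}
      {x : RepX t h α | (∀ v, muC t h α x v = (lam v : ℂ) • 1) ∧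
        ∀ v, muR t h α x v = (Complex.I * (th v : ℂ)) • 1} := by
    rintro x ⟨hC, hR⟩
    constructor
    · intro v
      rw [muC_qact, n1, n2, n3, e1, e2, hC v, hR v, smul_zero, sub_zero, smul_one_ct,
        star_sub, star_neg, hsr, star_mul', hsI, hsr]
      match_scalars
      ring
    · intro v
      rw [muR_qact, n4, n5, n6, g0, g2, g3, zero_smul, hC v,
        smul_one_ct, star_sub, star_neg, hsr, star_mul', hsI, hsr]
      match_scalars
      first
        | ring1
        | linear_combination (-(Complex.I * (th v : ℂ))) * Complex.I_mul_I
        | linear_combination (Complex.I * (th v : ℂ)) * Complex.I_mul_I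
  exact Set.InvOn.bijOn ⟨fun x _ => hgf x, fun x _ => hfg x⟩ hmapsf hmapsg


end QuiverMomentMaps
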